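/- Bound on the off-policy cost coefficient: if β < 1 and the concentrability coefficient C is finite, then for every f ∈ F with M(f) > 0, the squared prediction error satisfies E(f)² ≤ (1/(1−γ))² · (C/(1−β)) · M(f); in particular the off-policy cost coefficient C* = sup_{f ∈ F} E(f)²/M(f) satisfies C* ≤ (1/(1−γ))² · C/(1−β). -/

import Mathlib

open MeasureTheory ProbabilityTheory
open scoped ENNReal NNReal

noncomputable section

/-- Expected value of `f (s, ·)` under the policy kernel at state `s`: `f(s,π)`. -/
def polExp {S A : Type*} [MeasurableSpace S] [MeasurableSpace A]
    (pol : Kernel S A) (f : S × A → ℝ) (s : S) : ℝ :=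
  ∫ a, f (s, a) ∂(pol s)

/-- The Bellman evaluation operator `(Tf)(s,a) = r(s,a) + γ E_{s' ∼ P(·|s,a)} f(s',π)`. -/
def bellmanOp {S A : Type*} [MeasurableSpace S] [MeasurableSpace A]
    (γ : ℝ) (rew : S × A → ℝ) (P : Kernel (S × A) S) (pol : Kernel S A)
    (f : S × A → ℝ) : S × A → ℝ :=
  fun sa => rew sa + γ * ∫ s', polExp pol f s' ∂(P sa)

/-- Squared `L²(μ)` norm: `‖h‖_μ² = E_μ h²`. -/
def l2sq {X : Type*} [MeasurableSpace X] (μ : Measure X) (h : X → ℝ) : ℝ :=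
  ∫ x, (h x) ^ 2 ∂μ

/-- `L²(μ)` norm `‖h‖_μ`. -/
def l2 {X : Type*} [MeasurableSpace X] (μ : Measure X) (h : X → ℝ) : ℝ :=
  Real.sqrt (l2sq μ h)

/-- Distance in `L²(μ)` from `h` to the class `F`: `inf_{g ∈ F} ‖g − h‖_μ`. -/
def projDist {S A : Type*} [MeasurableSpace S] [MeasurableSpace A]
    (μ : Measure (S × A)) (F : Set ((S × A) → ℝ)) (h : (S × A) → ℝ) : ℝ :=
  sInf ((fun g => l2 μ (fun x => g x - h x)) '' F)

/-- Bellman error `‖f − Tf‖_μ`. -/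
def bellErr {S A : Type*} [MeasurableSpace S] [MeasurableSpace A]
    (γ : ℝ) (rew : S × A → ℝ) (P : Kernel (S × A) S) (pol : Kernel S A)
    (μ : Measure (S × A)) (f : (S × A) → ℝ) : ℝ :=
  l2 μ (fun x => f x - bellmanOp γ rew P pol f x)

/-- The localized class `F(r) = {f ∈ F : ‖f − Tf‖_μ ≤ r}`. -/
def Floc {S A : Type*} [MeasurableSpace S] [MeasurableSpace A]
    (γ : ℝ) (rew : S × A → ℝ) (P : Kernel (S × A) S) (pol : Kernel S A)
    (μ : Measure (S × A)) (F : Set ((S × A) → ℝ)) (r : ℝ) : Set ((S × A) → ℝ) :=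
  {f ∈ F | bellErr γ rew P pol μ f ≤ r}

/-- The incompleteness function `I(r) = sup_{f ∈ F(r)} inf_{g ∈ F} ‖g − Tf‖_μ`. -/
def Iloc {S A : Type*} [MeasurableSpace S] [MeasurableSpace A]
    (γ : ℝ) (rew : S × A → ℝ) (P : Kernel (S × A) S) (pol : Kernel S A)
    (μ : Measure (S × A)) (F : Set ((S × A) → ℝ)) (r : ℝ) : ℝ :=
  sSup ((fun f => projDist μ F (bellmanOp γ rew P pol f)) '' Floc γ rew P pol μ F r)

/-- The incompleteness factor
`β = sup_{f ∈ F, ‖f−Tf‖_μ > 0} inf_{g ∈ F} ‖g − Tf‖_μ / ‖f − Tf‖_μ`. -/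
def betaFac {S A : Type*} [MeasurableSpace S] [MeasurableSpace A]
    (γ : ℝ) (rew : S × A → ℝ) (P : Kernel (S × A) S) (pol : Kernel S A)
    (μ : Measure (S × A)) (F : Set ((S × A) → ℝ)) : ℝ :=
  sSup ((fun f => projDist μ F (bellmanOp γ rew P pol f) / bellErr γ rew P pol μ f) ''
    {f ∈ F | 0 < bellErr γ rew P pol μ f})

/-- The population minimax loss `M(f) = ‖f − Tf‖_μ² − inf_{g ∈ F} ‖g − Tf‖_μ²`. -/
def minimaxLoss {S A : Type*} [MeasurableSpace S] [MeasurableSpace A]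
    (γ : ℝ) (rew : S × A → ℝ) (P : Kernel (S × A) S) (pol : Kernel S A)
    (μ : Measure (S × A)) (F : Set ((S × A) → ℝ)) (f : (S × A) → ℝ) : ℝ :=
  l2sq μ (fun x => f x - bellmanOp γ rew P pol f x) -
    sInf ((fun g => l2sq μ (fun x => g x - bellmanOp γ rew P pol f x)) '' F)

/-- One step of the state-action chain: transition by `P` then act by `pol`. -/
def stepMeas {S A : Type*} [MeasurableSpace S] [MeasurableSpace A]
    (P : Kernel (S × A) S) (pol : Kernel S A) (sa : S × A) : Measure (S × A) :=
  (P sa).bind (fun s' => (pol s').map (fun a' => (s', a')))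

/-- The law `P_h` of `(S_h, A_h)` when following `pol` from the state `s0`. -/
def stepLaw {S A : Type*} [MeasurableSpace S] [MeasurableSpace A]
    (P : Kernel (S × A) S) (pol : Kernel S A) (s0 : S) : ℕ → Measure (S × A)
  | 0 => (pol s0).map (fun a => (s0, a))
  | (h + 1) => (stepLaw P pol s0 h).bind (stepMeas P pol)

/-- The discounted occupancy measure `d^π = (1−γ) Σ_{h≥0} γ^h P_h`. -/
def occMeas {S A : Type*} [MeasurableSpace S] [MeasurableSpace A]
    (γ : ℝ) (P : Kernel (S × A) S) (pol : Kernel S A) (s0 : S) : Measure (S × A) :=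
  ENNReal.ofReal (1 - γ) •
    Measure.sum (fun h : ℕ => ENNReal.ofReal γ ^ h • stepLaw P pol s0 h)

/-- The prediction error `E(f) = (f* − f)(s₀, π)`. -/
def predErr {S A : Type*} [MeasurableSpace S] [MeasurableSpace A]
    (pol : Kernel S A) (fstar f : S × A → ℝ) (s0 : S) : ℝ :=
  polExp pol (fun x => fstar x - f x) s0

/-- The concentrability coefficient `C = sup_{f ∈ F} ‖f − Tf‖_π² / ‖f − Tf‖_μ²`. -/
def concCoef {S A : Type*} [MeasurableSpace S] [MeasurableSpace A]
    (γ : ℝ) (rew : S × A → ℝ) (P : Kernel (S × A) S) (pol : Kernel S A)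
    (μ dpi : Measure (S × A)) (F : Set ((S × A) → ℝ)) : ℝ :=
  sSup ((fun f => l2sq dpi (fun x => f x - bellmanOp γ rew P pol f x) /
      l2sq μ (fun x => f x - bellmanOp γ rew P pol f x)) '' F)

/-- The law of a data tuple `(s, a, R, s')` with `(s,a) ∼ μ`, `R ∼ RL(s,a)`,
`s' ∼ P(·|s,a)`. -/
def tupleLaw {S A : Type*} [MeasurableSpace S] [MeasurableSpace A]
    (μ : Measure (S × A)) (RL : Kernel (S × A) ℝ) (P : Kernel (S × A) S) :
    Measure ((S × A) × ℝ × S) :=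
  μ.bind (fun sa => ((RL sa).prod (P sa)).map (fun rs => (sa, rs)))

/-- The squared TD cost `C(g,f) = (g(s,a) − R − γ f(s',π))²` of a tuple. -/
def tdCost {S A : Type*} [MeasurableSpace S] [MeasurableSpace A]
    (γ : ℝ) (pol : Kernel S A) (g f : S × A → ℝ) (t : (S × A) × ℝ × S) : ℝ :=
  (g t.1 - t.2.1 - γ * polExp pol f t.2.2) ^ 2

/-- The empirical loss `L̂(g,f)`: the average of the squared TD cost over the dataset. -/
def empLoss {S A : Type*} [MeasurableSpace S] [MeasurableSpace A]
    (γ : ℝ) (pol : Kernel S A) {n : ℕ} (D : Fin n → (S × A) × ℝ × S)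
    (g f : S × A → ℝ) : ℝ :=
  (∑ i, tdCost γ pol g f (D i)) / n

/-- The empirical minimax objective `M̂(f) = L̂(f,f) − inf_{g ∈ F} L̂(g,f)`. -/
def empMinimax {S A : Type*} [MeasurableSpace S] [MeasurableSpace A]
    (γ : ℝ) (pol : Kernel S A) (F : Set ((S × A) → ℝ)) {n : ℕ}
    (D : Fin n → (S × A) × ℝ × S) (f : S × A → ℝ) : ℝ :=
  empLoss γ pol D f f - sInf ((fun g => empLoss γ pol D g f) '' F)

/-- `f̂` is an empirical minimizer of `M̂` over `F`. -/
def IsEmpMinimizer {S A : Type*} [MeasurableSpace S] [MeasurableSpace A]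
    (γ : ℝ) (pol : Kernel S A) (F : Set ((S × A) → ℝ)) {n : ℕ}
    (D : Fin n → (S × A) × ℝ × S) (fhat : S × A → ℝ) : Prop :=
  fhat ∈ F ∧ ∀ f ∈ F, empMinimax γ pol F D fhat ≤ empMinimax γ pol F D f

/-- The law of a single Rademacher sign: `±1` with probability `1/2` each. -/
def signMeas : Measure ℝ :=
  (2⁻¹ : ℝ≥0∞) • Measure.dirac (1 : ℝ) + (2⁻¹ : ℝ≥0∞) • Measure.dirac (-1 : ℝ)

/-- Rademacher complexity of a class `H` with `n` covariates drawn i.i.d. from `ξ`: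
`R_n[H] = E sup_{h ∈ H} |(1/n) Σ_i ε_i h(x_i)|`. -/
def radComp {X : Type*} [MeasurableSpace X] (ξ : Measure X) (n : ℕ)
    (H : Set (X → ℝ)) : ℝ :=
  ∫ p, sSup ((fun h => |(∑ i, p.2 i * h (p.1 i)) / n|) '' H)
    ∂((Measure.pi (fun _ : Fin n => ξ)).prod (Measure.pi (fun _ : Fin n => signMeas)))

/-- The `X`-process `X(f) = C(f,f) − C(g_f, f)` as a function of the data tuple. -/
def Xproc {S A : Type*} [MeasurableSpace S] [MeasurableSpace A]
    (γ : ℝ) (pol : Kernel S A) (gf : ((S × A) → ℝ) → (S × A) → ℝ)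
    (f : S × A → ℝ) : (S × A) × ℝ × S → ℝ :=
  fun t => tdCost γ pol f f t - tdCost γ pol (gf f) f t

/-- The `Y`-process `Y(g) = C(f*,f*) − C(g, f*)` as a function of the data tuple. -/
def Yproc {S A : Type*} [MeasurableSpace S] [MeasurableSpace A]
    (γ : ℝ) (pol : Kernel S A) (fstar g : S × A → ℝ) : (S × A) × ℝ × S → ℝ :=
  fun t => tdCost γ pol fstar fstar t - tdCost γ pol g fstar t

end

noncomputable section AuxOPC
open MeasureTheory ProbabilityTheory
open scoped ENNReal NNReal

namespace OPC

variable {α β : Type*} [MeasurableSpace α] [MeasurableSpace β]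

lemma integrable_of_bdd {ν : Measure α} [IsFiniteMeasure ν] {g : α → ℝ}
    (hg : Measurable g) {B : ℝ} (hB : ∀ x, |g x| ≤ B) : Integrable g ν :=
  (integrable_const B).mono' hg.aestronglyMeasurable
    (ae_of_all _ fun x => by simpa [Real.norm_eq_abs] using hB x)

lemma abs_integral_le {ν : Measure α} [IsProbabilityMeasure ν] {g : α → ℝ} {B : ℝ}
    (hB : ∀ x, |g x| ≤ B) : |∫ x, g x ∂ν| ≤ B := by
  have := norm_integral_le_of_norm_le_const (μ := ν) (C := B) (f := g)
    (ae_of_all _ fun x => by simpa [Real.norm_eq_abs] using hB x)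
  simpa [Real.norm_eq_abs, measure_univ] using this

lemma bind_eq_map_snd (μ : Measure α) [SFinite μ] (κ : Kernel α β) [IsSFiniteKernel κ] :
    μ.bind ⇑κ = (μ ⊗ₘ κ).map Prod.snd := by
  ext s hs
  rw [Measure.bind_apply hs (Kernel.measurable κ).aemeasurable, Measure.map_apply measurable_snd hs,
    Measure.compProd_apply (measurable_snd hs)]
  rfl

lemma isProb_bind (μ : Measure α) [IsProbabilityMeasure μ] (κ : Kernel α β)
    [IsMarkovKernel κ] : IsProbabilityMeasure (μ.bind ⇑κ) := by
  rw [OPC.bind_eq_map_snd]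
  exact Measure.isProbabilityMeasure_map measurable_snd.aemeasurable

lemma integral_bind_kernel (μ : Measure α) [IsProbabilityMeasure μ] (κ : Kernel α β)
    [IsMarkovKernel κ] {g : β → ℝ} (hg : Measurable g) {B : ℝ} (hB : ∀ y, |g y| ≤ B) :
    ∫ y, g y ∂(μ.bind ⇑κ) = ∫ a, ∫ y, g y ∂(κ a) ∂μ := by
  rw [OPC.bind_eq_map_snd, integral_map measurable_snd.aemeasurable hg.aestronglyMeasurable,
    Measure.integral_compProd (f := fun x => g x.2)
      (OPC.integrable_of_bdd (hg.comp measurable_snd) (fun x => hB x.2))]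

variable {S A : Type*} [MeasurableSpace S] [MeasurableSpace A]

lemma measurable_polExp (pol : Kernel S A) [IsSFiniteKernel pol] {f : S × A → ℝ}
    (hf : Measurable f) : Measurable (polExp pol f) :=
  (MeasureTheory.StronglyMeasurable.integral_kernel_prod_right' (κ := pol)
    hf.stronglyMeasurable).measurable

lemma abs_polExp_le (pol : Kernel S A) [IsMarkovKernel pol] {f : S × A → ℝ} {B : ℝ}
    (hB : ∀ x, |f x| ≤ B) (s : S) : |polExp pol f s| ≤ B :=
  abs_integral_le (fun a => hB (s, a))

lemma polExp_sub (pol : Kernel S A) [IsMarkovKernel pol] {f g : S × A → ℝ}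
    (hf : Measurable f) (hg : Measurable g) {B : ℝ} (hfB : ∀ x, |f x| ≤ B)
    (hgB : ∀ x, |g x| ≤ B) (s : S) :
    polExp pol (fun x => f x - g x) s = polExp pol f s - polExp pol g s :=
  integral_sub (integrable_of_bdd (hf.comp measurable_prodMk_left) (fun a => hfB (s, a)))
    (integrable_of_bdd (hg.comp measurable_prodMk_left) (fun a => hgB (s, a)))

variable (P : Kernel (S × A) S) [IsMarkovKernel P] (pol : Kernel S A) [IsMarkovKernel pol]

lemma measurable_Pexp {g : S × A → ℝ} (hg : Measurable g) :
    Measurable (fun x : S × A => ∫ s', polExp pol g s' ∂P x) :=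
  (MeasureTheory.StronglyMeasurable.integral_kernel_prod_right' (κ := P)
    (((measurable_polExp pol hg).comp measurable_snd).stronglyMeasurable
      (f := fun p : (S × A) × S => polExp pol g p.2))).measurable

lemma abs_Pexp_le {g : S × A → ℝ} {B : ℝ} (hB : ∀ x, |g x| ≤ B) (x : S × A) :
    |∫ s', polExp pol g s' ∂P x| ≤ B :=
  abs_integral_le (fun s' => abs_polExp_le pol hB s')

lemma measurable_bellman (γ : ℝ) {rew : S × A → ℝ} (hrew : Measurable rew)
    {f : S × A → ℝ} (hf : Measurable f) : Measurable (bellmanOp γ rew P pol f) :=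
  hrew.add ((measurable_Pexp P pol hf).const_mul γ)

lemma abs_bellman_le {γ : ℝ} (hγ0 : 0 ≤ γ) {rew : S × A → ℝ}
    (hrew_bdd : ∀ x, rew x ∈ Set.Icc (0 : ℝ) 1) {f : S × A → ℝ}
    (hf_bdd : ∀ x, |f x| ≤ 1) (x : S × A) : |bellmanOp γ rew P pol f x| ≤ 1 + γ := by
  have h1 : |rew x| ≤ 1 := abs_le.2 ⟨by linarith [(hrew_bdd x).1], (hrew_bdd x).2⟩
  have h2 : |γ * ∫ s', polExp pol f s' ∂P x| ≤ γ * 1 := by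
    rw [abs_mul, abs_of_nonneg hγ0]
    exact mul_le_mul_of_nonneg_left (abs_Pexp_le P pol hf_bdd x) hγ0
  calc |bellmanOp γ rew P pol f x| ≤ |rew x| + |γ * ∫ s', polExp pol f s' ∂P x| :=
        abs_add_le _ _
    _ ≤ 1 + γ := by linarith

omit [IsMarkovKernel P] in
lemma stepMeas_eq : stepMeas P pol = ⇑((Kernel.id ×ₖ pol) ∘ₖ P) := by
  funext sa
  rw [Kernel.comp_apply, stepMeas]
  congr 1
  funext s'
  rw [Kernel.prod_apply, Kernel.id_apply, Measure.dirac_prod]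

lemma isProb_stepLaw (s0 : S) (h : ℕ) : IsProbabilityMeasure (stepLaw P pol s0 h) := by
  induction h with
  | zero => exact Measure.isProbabilityMeasure_map measurable_prodMk_left.aemeasurable
  | succ n ih =>
    rw [stepLaw, stepMeas_eq]
    exact isProb_bind _ _

lemma stepLaw_succ_integral {g : S × A → ℝ} (hg : Measurable g) {B : ℝ}
    (hB : ∀ x, |g x| ≤ B) (s0 : S) (h : ℕ) :
    ∫ y, g y ∂(stepLaw P pol s0 (h + 1)) =
      ∫ x, (∫ s', polExp pol g s' ∂P x) ∂(stepLaw P pol s0 h) := by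
  haveI := isProb_stepLaw P pol s0 h
  rw [show stepLaw P pol s0 (h + 1) = (stepLaw P pol s0 h).bind ⇑((Kernel.id ×ₖ pol) ∘ₖ P) by
    rw [stepLaw, stepMeas_eq]]
  rw [integral_bind_kernel _ _ hg hB]
  refine integral_congr_ae (ae_of_all _ fun x => ?_)
  show ∫ y, g y ∂((Kernel.id ×ₖ pol) ∘ₖ P) x = ∫ s', polExp pol g s' ∂P x
  rw [Kernel.comp_apply, integral_bind_kernel (P x) (Kernel.id ×ₖ pol) hg hB]
  refine integral_congr_ae (ae_of_all _ fun s' => ?_)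
  show ∫ y, g y ∂(Kernel.id ×ₖ pol) s' = polExp pol g s'
  rw [Kernel.prod_apply, Kernel.id_apply, Measure.dirac_prod,
    integral_map measurable_prodMk_left.aemeasurable hg.aestronglyMeasurable]
  rfl


lemma sum_part_finite (γ : ℝ) (hγ1 : γ < 1) (s0 : S) :
    IsFiniteMeasure (Measure.sum (fun h : ℕ => ENNReal.ofReal γ ^ h • stepLaw P pol s0 h)) := by
  constructor
  rw [Measure.sum_apply _ MeasurableSet.univ]
  have hcalc : ∀ h : ℕ, (ENNReal.ofReal γ ^ h • stepLaw P pol s0 h) Set.univ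
      = ENNReal.ofReal γ ^ h := by
    intro h
    haveI := isProb_stepLaw P pol s0 h
    simp [Measure.smul_apply, measure_univ]
  simp_rw [hcalc, ENNReal.tsum_geometric]
  have : 1 - ENNReal.ofReal γ ≠ 0 := by
    simp only [ne_eq, tsub_eq_zero_iff_le, not_le]
    exact ENNReal.ofReal_lt_one.2 hγ1
  exact (ENNReal.inv_lt_top).2 (pos_iff_ne_zero.2 this)

lemma isProb_occMeas {γ : ℝ} (hγ0 : 0 ≤ γ) (hγ1 : γ < 1) (s0 : S) :
    IsProbabilityMeasure (occMeas γ P pol s0) := by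
  constructor
  rw [occMeas, Measure.smul_apply, Measure.sum_apply _ MeasurableSet.univ]
  have hcalc : ∀ h : ℕ, (ENNReal.ofReal γ ^ h • stepLaw P pol s0 h) Set.univ
      = ENNReal.ofReal γ ^ h := by
    intro h
    haveI := isProb_stepLaw P pol s0 h
    simp [Measure.smul_apply, measure_univ]
  simp_rw [hcalc, ENNReal.tsum_geometric]
  have h1 : (1 : ℝ≥0∞) - ENNReal.ofReal γ = ENNReal.ofReal (1 - γ) := by
    rw [ENNReal.ofReal_sub _ hγ0, ENNReal.ofReal_one]
  rw [h1, smul_eq_mul]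
  exact ENNReal.mul_inv_cancel (by simp [ENNReal.ofReal_eq_zero]; linarith)
    ENNReal.ofReal_ne_top

lemma integral_occMeas {γ : ℝ} (hγ0 : 0 ≤ γ) (hγ1 : γ < 1) (s0 : S)
    {g : S × A → ℝ} (hg : Measurable g) {B : ℝ} (hB : ∀ x, |g x| ≤ B) :
    ∫ x, g x ∂(occMeas γ P pol s0) =
      (1 - γ) * ∑' h : ℕ, γ ^ h * ∫ x, g x ∂(stepLaw P pol s0 h) := by
  haveI := sum_part_finite P pol γ hγ1 s0
  rw [occMeas, integral_smul_measure,
    integral_sum_measure (integrable_of_bdd hg hB)]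
  rw [ENNReal.toReal_ofReal (by linarith), smul_eq_mul]
  congr 1
  refine tsum_congr fun h => ?_
  rw [integral_smul_measure, ENNReal.toReal_pow, ENNReal.toReal_ofReal hγ0, smul_eq_mul]

lemma sq_integral_abs_le {ν : Measure α} [IsProbabilityMeasure ν] {g : α → ℝ}
    (hg : Measurable g) {B : ℝ} (hB : ∀ x, |g x| ≤ B) :
    (∫ x, |g x| ∂ν) ^ 2 ≤ ∫ x, g x ^ 2 ∂ν := by
  have hX : MeasureTheory.MemLp (fun x => |g x|) 2 ν :=
    MeasureTheory.MemLp.of_bound hg.abs.aestronglyMeasurable B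
      (ae_of_all _ fun x => by simpa [Real.norm_eq_abs, abs_abs] using hB x)
  have h := ProbabilityTheory.variance_nonneg (fun x => |g x|) ν
  rw [ProbabilityTheory.variance_eq_sub hX] at h
  have h2 : (∫ x, ((fun x => |g x|) ^ 2) x ∂ν) = ∫ x, g x ^ 2 ∂ν := by
    refine integral_congr_ae (ae_of_all _ fun x => ?_)
    simp [Pi.pow_apply, sq_abs]
  rw [show ν[(fun x => |g x|) ^ 2] = ∫ x, ((fun x => |g x|) ^ 2) x ∂ν from rfl] at h
  rw [h2] at h
  linarith


open Filter Topology in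
lemma key_bound (γ : ℝ) (hγ0 : 0 ≤ γ) (hγ1 : γ < 1) (s0 : S)
    {Δ ε : S × A → ℝ} (hΔm : Measurable Δ) (hεm : Measurable ε)
    (hΔb : ∀ x, |Δ x| ≤ 2) (hεb : ∀ x, |ε x| ≤ 3)
    (heq : ∀ x, Δ x = -(ε x) + γ * ∫ s', polExp pol Δ s' ∂P x) :
    (∫ x, Δ x ∂stepLaw P pol s0 0) ^ 2 ≤
      (1 / (1 - γ)) ^ 2 * ∫ x, ε x ^ 2 ∂(occMeas γ P pol s0) := by
  have hps : ∀ h, IsProbabilityMeasure (stepLaw P pol s0 h) := isProb_stepLaw P pol s0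
  have h1γ : (0 : ℝ) < 1 - γ := by linarith
  have hrec : ∀ h : ℕ, ∫ x, Δ x ∂stepLaw P pol s0 h
      = -(∫ x, ε x ∂stepLaw P pol s0 h) + γ * ∫ x, Δ x ∂stepLaw P pol s0 (h + 1) := by
    intro h
    haveI := hps h
    have int1 : Integrable (fun x => -(ε x)) (stepLaw P pol s0 h) :=
      (integrable_of_bdd hεm hεb).neg
    have int2 : Integrable (fun x => γ * ∫ s', polExp pol Δ s' ∂P x)
        (stepLaw P pol s0 h) :=
      (integrable_of_bdd (measurable_Pexp P pol hΔm) (abs_Pexp_le P pol hΔb)).const_mul γ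
    calc ∫ x, Δ x ∂stepLaw P pol s0 h
        = ∫ x, (-(ε x) + γ * ∫ s', polExp pol Δ s' ∂P x) ∂stepLaw P pol s0 h :=
          integral_congr_ae (ae_of_all _ heq)
      _ = (∫ x, -(ε x) ∂stepLaw P pol s0 h)
          + ∫ x, γ * ∫ s', polExp pol Δ s' ∂P x ∂stepLaw P pol s0 h :=
          integral_add int1 int2
      _ = -(∫ x, ε x ∂stepLaw P pol s0 h)
          + γ * ∫ x, (∫ s', polExp pol Δ s' ∂P x) ∂stepLaw P pol s0 h := by
          rw [integral_neg, integral_const_mul]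
      _ = -(∫ x, ε x ∂stepLaw P pol s0 h)
          + γ * ∫ x, Δ x ∂stepLaw P pol s0 (h + 1) := by
          rw [stepLaw_succ_integral P pol hΔm hΔb s0 h]
  have htel : ∀ n : ℕ, ∫ x, Δ x ∂stepLaw P pol s0 0
      = (∑ h ∈ Finset.range n, γ ^ h * (-(∫ x, ε x ∂stepLaw P pol s0 h)))
        + γ ^ n * ∫ x, Δ x ∂stepLaw P pol s0 n := by
    intro n
    induction n with
    | zero => simp
    | succ n ih =>
      rw [Finset.sum_range_succ, ih, hrec n]
      ring
  have hd_bdd : ∀ n, |∫ x, Δ x ∂stepLaw P pol s0 n| ≤ 2 := fun n => by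
    haveI := hps n; exact abs_integral_le hΔb
  have heabs : ∀ n, |∫ x, ε x ∂stepLaw P pol s0 n| ≤ ∫ x, |ε x| ∂stepLaw P pol s0 n :=
    fun n => by
      simpa [Real.norm_eq_abs] using norm_integral_le_integral_norm (μ := stepLaw P pol s0 n) ε
  have hiabs_le : ∀ n, ∫ x, |ε x| ∂stepLaw P pol s0 n ≤ 3 := fun n => by
    haveI := hps n
    exact le_trans (le_abs_self _)
      (abs_integral_le (fun x => by simpa [abs_abs] using hεb x))
  have he_bdd : ∀ n, |∫ x, ε x ∂stepLaw P pol s0 n| ≤ 3 :=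
    fun n => le_trans (heabs n) (hiabs_le n)
  have hγn : Tendsto (fun n : ℕ => γ ^ n * ∫ x, Δ x ∂stepLaw P pol s0 n) atTop (𝓝 0) := by
    apply squeeze_zero_norm (a := fun n => 2 * γ ^ n)
    · intro n
      rw [Real.norm_eq_abs, abs_mul, abs_pow, abs_of_nonneg hγ0, mul_comm]
      exact mul_le_mul_of_nonneg_right (hd_bdd n) (pow_nonneg hγ0 n)
    · simpa using (tendsto_pow_atTop_nhds_zero_of_lt_one hγ0 hγ1).const_mul (2 : ℝ)
  have hlim : Tendsto
      (fun n => ∑ h ∈ Finset.range n, γ ^ h * (-(∫ x, ε x ∂stepLaw P pol s0 h)))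
      atTop (𝓝 (∫ x, Δ x ∂stepLaw P pol s0 0)) := by
    have h2 := (tendsto_const_nhds (x := ∫ x, Δ x ∂stepLaw P pol s0 0)
      (f := atTop (α := ℕ))).sub hγn
    rw [sub_zero] at h2
    refine h2.congr fun n => ?_
    have := htel n; linarith
  have hgeo : Summable (fun h : ℕ => 3 * γ ^ h) :=
    (summable_geometric_of_lt_one hγ0 hγ1).mul_left 3
  have habs_summ : Summable
      (fun h : ℕ => |γ ^ h * (-(∫ x, ε x ∂stepLaw P pol s0 h))|) := by
    refine Summable.of_nonneg_of_le (fun h => abs_nonneg _) (fun h => ?_) hgeo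
    rw [abs_mul, abs_neg, abs_pow, abs_of_nonneg hγ0, mul_comm]
    exact mul_le_mul_of_nonneg_right (he_bdd h) (pow_nonneg hγ0 h)
  have hsum : Summable (fun h : ℕ => γ ^ h * (-(∫ x, ε x ∂stepLaw P pol s0 h))) :=
    Summable.of_abs habs_summ
  have htsum : (∑' h : ℕ, γ ^ h * (-(∫ x, ε x ∂stepLaw P pol s0 h)))
      = ∫ x, Δ x ∂stepLaw P pol s0 0 :=
    tendsto_nhds_unique hsum.hasSum.tendsto_sum_nat hlim
  have hsumRHS : Summable (fun h : ℕ => γ ^ h * ∫ x, |ε x| ∂stepLaw P pol s0 h) := by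
    refine Summable.of_nonneg_of_le (fun h => ?_) (fun h => ?_) hgeo
    · exact mul_nonneg (pow_nonneg hγ0 h) (integral_nonneg fun x => abs_nonneg _)
    · rw [mul_comm]
      exact mul_le_mul_of_nonneg_right (hiabs_le h) (pow_nonneg hγ0 h)
  have habs : |∫ x, Δ x ∂stepLaw P pol s0 0|
      ≤ ∑' h : ℕ, γ ^ h * ∫ x, |ε x| ∂stepLaw P pol s0 h := by
    rw [← htsum]
    have hnorm : Summable fun h : ℕ => ‖γ ^ h * (-(∫ x, ε x ∂stepLaw P pol s0 h))‖ := by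
      simpa only [Real.norm_eq_abs] using habs_summ
    calc |∑' h : ℕ, γ ^ h * (-(∫ x, ε x ∂stepLaw P pol s0 h))|
        ≤ ∑' h : ℕ, |γ ^ h * (-(∫ x, ε x ∂stepLaw P pol s0 h))| := by
          simpa only [Real.norm_eq_abs] using norm_tsum_le_tsum_norm hnorm
      _ ≤ ∑' h : ℕ, γ ^ h * ∫ x, |ε x| ∂stepLaw P pol s0 h := by
          refine Summable.tsum_le_tsum (fun h => ?_) habs_summ hsumRHS
          rw [abs_mul, abs_neg, abs_pow, abs_of_nonneg hγ0]
          exact mul_le_mul_of_nonneg_left (heabs h) (pow_nonneg hγ0 h)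
  have hocc : ∫ x, |ε x| ∂occMeas γ P pol s0
      = (1 - γ) * ∑' h : ℕ, γ ^ h * ∫ x, |ε x| ∂stepLaw P pol s0 h :=
    integral_occMeas P pol hγ0 hγ1 s0 hεm.abs (fun x => by simpa [abs_abs] using hεb x)
  haveI := isProb_occMeas P pol hγ0 hγ1 s0
  have hCS : (∫ x, |ε x| ∂occMeas γ P pol s0) ^ 2 ≤ ∫ x, ε x ^ 2 ∂occMeas γ P pol s0 :=
    sq_integral_abs_le hεm hεb
  have hd0 : |∫ x, Δ x ∂stepLaw P pol s0 0|
      ≤ (1 / (1 - γ)) * ∫ x, |ε x| ∂occMeas γ P pol s0 := by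
    rw [hocc]
    calc |∫ x, Δ x ∂stepLaw P pol s0 0|
        ≤ ∑' h : ℕ, γ ^ h * ∫ x, |ε x| ∂stepLaw P pol s0 h := habs
      _ = (1 / (1 - γ)) * ((1 - γ) *
          ∑' h : ℕ, γ ^ h * ∫ x, |ε x| ∂stepLaw P pol s0 h) := by
          field_simp
  calc (∫ x, Δ x ∂stepLaw P pol s0 0) ^ 2
      = |∫ x, Δ x ∂stepLaw P pol s0 0| ^ 2 := (sq_abs _).symm
    _ ≤ ((1 / (1 - γ)) * ∫ x, |ε x| ∂occMeas γ P pol s0) ^ 2 :=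
        pow_le_pow_left₀ (abs_nonneg _) hd0 2
    _ = (1 / (1 - γ)) ^ 2 * (∫ x, |ε x| ∂occMeas γ P pol s0) ^ 2 := by ring
    _ ≤ (1 / (1 - γ)) ^ 2 * ∫ x, ε x ^ 2 ∂occMeas γ P pol s0 := by
        have h0 : (0:ℝ) ≤ (1 / (1 - γ)) ^ 2 := by positivity
        exact mul_le_mul_of_nonneg_left hCS h0


lemma pred_err_sq_le (γ : ℝ) (hγ0 : 0 ≤ γ) (hγ1 : γ < 1)
    (rew : S × A → ℝ) (hrew_meas : Measurable rew)
    (hrew_bdd : ∀ x, rew x ∈ Set.Icc (0 : ℝ) 1)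
    (fstar : S × A → ℝ) (hfstar_meas : Measurable fstar)
    (hfstar_bdd : ∀ x, |fstar x| ≤ 1)
    (hfix : bellmanOp γ rew P pol fstar = fstar)
    (s0 : S) {f : S × A → ℝ} (hf_meas : Measurable f) (hf_bdd : ∀ x, |f x| ≤ 1) :
    (predErr pol fstar f s0) ^ 2 ≤ (1 / (1 - γ)) ^ 2 *
      l2sq (occMeas γ P pol s0) (fun x => f x - bellmanOp γ rew P pol f x) := by
  have hTm : Measurable (bellmanOp γ rew P pol f) :=
    measurable_bellman P pol γ hrew_meas hf_meas
  have hTb : ∀ x, |bellmanOp γ rew P pol f x| ≤ 1 + γ :=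
    abs_bellman_le P pol hγ0 hrew_bdd hf_bdd
  have hεb : ∀ x, |f x - bellmanOp γ rew P pol f x| ≤ 3 := fun x => by
    have := abs_sub (f x) (bellmanOp γ rew P pol f x)
    have h1 := hf_bdd x; have h2 := hTb x; linarith
  have hΔb : ∀ x, |fstar x - f x| ≤ 2 := fun x => by
    have := abs_sub (fstar x) (f x)
    have h1 := hf_bdd x; have h2 := hfstar_bdd x; linarith
  have heq : ∀ x, fstar x - f x = -(f x - bellmanOp γ rew P pol f x)
      + γ * ∫ s', polExp pol (fun y => fstar y - f y) s' ∂P x := by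
    intro x
    have h3 : ∫ s', polExp pol (fun y => fstar y - f y) s' ∂P x
        = (∫ s', polExp pol fstar s' ∂P x) - ∫ s', polExp pol f s' ∂P x := by
      rw [← integral_sub
        (integrable_of_bdd (measurable_polExp pol hfstar_meas) (abs_polExp_le pol hfstar_bdd))
        (integrable_of_bdd (measurable_polExp pol hf_meas) (abs_polExp_le pol hf_bdd))]
      exact integral_congr_ae (ae_of_all _ fun s' =>
        polExp_sub pol hfstar_meas hf_meas (B := 1) hfstar_bdd hf_bdd s')
    rw [h3]
    simp only [bellmanOp]
    conv_lhs => rw [← hfix]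
    simp only [bellmanOp]
    ring
  have hkey := key_bound P pol γ hγ0 hγ1 s0 (hfstar_meas.sub hf_meas) (hf_meas.sub hTm)
    hΔb hεb heq
  have hpe : predErr pol fstar f s0 = ∫ x, (fstar x - f x) ∂stepLaw P pol s0 0 := by
    rw [show stepLaw P pol s0 0 = (pol s0).map (fun a => (s0, a)) from rfl,
      integral_map (φ := fun a => (s0, a)) (f := fun x => fstar x - f x)
        measurable_prodMk_left.aemeasurable (hfstar_meas.sub hf_meas).aestronglyMeasurable]
    rfl
  rw [hpe]
  simpa [l2sq] using hkey


lemma l2sq_nonneg {X : Type*} [MeasurableSpace X] (ν : Measure X) (h : X → ℝ) :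
    0 ≤ l2sq ν h := integral_nonneg fun x => sq_nonneg _

lemma sq_l2 {X : Type*} [MeasurableSpace X] (ν : Measure X) (h : X → ℝ) :
    (l2 ν h) ^ 2 = l2sq ν h := Real.sq_sqrt (l2sq_nonneg ν h)

end OPC
end AuxOPC
noncomputable section

/-- Bound on the off-policy cost coefficient: if `β < 1` and the
concentrability coefficient `C` is finite, then for every `f ∈ F` with `M(f) > 0`,
`E(f)² ≤ (1/(1−γ))²·(C/(1−β))·M(f)`; in particular
`C* = sup_{f ∈ F} E(f)²/M(f) ≤ (1/(1−γ))²·C/(1−β)`. -/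
theorem off_policy_cost_coefficient_bound
    {S A : Type*} [MeasurableSpace S] [MeasurableSpace A]
    (γ : ℝ) (hγ0 : 0 ≤ γ) (hγ1 : γ < 1)
    (rew : S × A → ℝ) (hrew_meas : Measurable rew)
    (hrew_bdd : ∀ x, rew x ∈ Set.Icc (0 : ℝ) 1)
    (P : Kernel (S × A) S) [IsMarkovKernel P]
    (pol : Kernel S A) [IsMarkovKernel pol]
    (μ : Measure (S × A)) [IsProbabilityMeasure μ]
    (F : Set ((S × A) → ℝ))
    (hF_meas : ∀ f ∈ F, Measurable f)
    (hF_bdd : ∀ f ∈ F, ∀ x, |f x| ≤ 1)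
    -- `f*` is the action-value function of the policy
    (fstar : (S × A) → ℝ) (hfstar_meas : Measurable fstar)
    (hfstar_bdd : ∀ x, |fstar x| ≤ 1)
    (hfix : bellmanOp γ rew P pol fstar = fstar)
    -- the initial state
    (s0 : S)
    -- `β < 1`
    (hβ : betaFac γ rew P pol μ F < 1)
    -- the concentrability coefficient is finite
    (hC : BddAbove ((fun f => l2sq (occMeas γ P pol s0)
        (fun x => f x - bellmanOp γ rew P pol f x) /
        l2sq μ (fun x => f x - bellmanOp γ rew P pol f x)) '' F)) :
    (∀ f ∈ F, 0 < minimaxLoss γ rew P pol μ F f →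
      (predErr pol fstar f s0) ^ 2 ≤
        (1 / (1 - γ)) ^ 2 *
          (concCoef γ rew P pol μ (occMeas γ P pol s0) F /
            (1 - betaFac γ rew P pol μ F)) *
          minimaxLoss γ rew P pol μ F f) ∧
    sSup ((fun f => (predErr pol fstar f s0) ^ 2 / minimaxLoss γ rew P pol μ F f) '' F) ≤
      (1 / (1 - γ)) ^ 2 *
        (concCoef γ rew P pol μ (occMeas γ P pol s0) F /
          (1 - betaFac γ rew P pol μ F)) := by
  classical
  set T := bellmanOp γ rew P pol with hT
  set β := betaFac γ rew P pol μ F with hβdef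
  set C := concCoef γ rew P pol μ (occMeas γ P pol s0) F with hCdef
  have h1γ : (0 : ℝ) < 1 - γ := by linarith
  -- C is nonnegative
  have hC0 : 0 ≤ C := by
    rcases F.eq_empty_or_nonempty with hFe | ⟨g0, hg0⟩
    · simp [hCdef, concCoef, hFe, Real.sSup_empty]
    · refine le_trans (div_nonneg (OPC.l2sq_nonneg _ _) (OPC.l2sq_nonneg _ _))
        (le_csSup hC ⟨g0, hg0, rfl⟩)
  -- main pointwise bound
  have key : ∀ f ∈ F, 0 < minimaxLoss γ rew P pol μ F f →
      (predErr pol fstar f s0) ^ 2 ≤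
        (1 / (1 - γ)) ^ 2 * (C / (1 - β)) * minimaxLoss γ rew P pol μ F f := by
    intro f hfF hM
    have hf_meas := hF_meas f hfF
    have hf_bdd := hF_bdd f hfF
    set Qμ := l2sq μ (fun x => f x - T f x) with hQμdef
    set Qπ := l2sq (occMeas γ P pol s0) (fun x => f x - T f x) with hQπdef
    set I := sInf ((fun g => l2sq μ (fun x => g x - T f x)) '' F) with hIdef
    have hFne : F.Nonempty := ⟨f, hfF⟩
    have hM' : minimaxLoss γ rew P pol μ F f = Qμ - I := rfl
    have hI0 : 0 ≤ I :=
      le_csInf (hFne.image _) (fun b ⟨g, _, hgb⟩ => hgb ▸ OPC.l2sq_nonneg _ _)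
    have hQμ_pos : 0 < Qμ := by rw [hM'] at hM; linarith
    -- Bellman error of f
    have hbe : bellErr γ rew P pol μ f = Real.sqrt Qμ := rfl
    have hbe_pos : 0 < bellErr γ rew P pol μ f := by
      rw [hbe]; exact Real.sqrt_pos.2 hQμ_pos
    -- the ratio set defining β
    set R := ((fun f => projDist μ F (T f) / bellErr γ rew P pol μ f) ''
      {f ∈ F | 0 < bellErr γ rew P pol μ f}) with hRdef
    have hfR : projDist μ F (T f) / bellErr γ rew P pol μ f ∈ R :=
      ⟨f, ⟨hfF, hbe_pos⟩, rfl⟩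
    have hproj_nonneg : ∀ h : (S × A) → ℝ, 0 ≤ projDist μ F h := fun h =>
      le_csInf (hFne.image _) (fun b ⟨g, _, hgb⟩ => hgb ▸ Real.sqrt_nonneg _)
    have hproj_le_err : ∀ g ∈ F, 0 < bellErr γ rew P pol μ g →
        projDist μ F (T g) ≤ bellErr γ rew P pol μ g := by
      intro g hgF _
      exact csInf_le ⟨0, fun b ⟨g', _, hgb⟩ => hgb ▸ Real.sqrt_nonneg _⟩ ⟨g, hgF, rfl⟩
    have hRbdd : BddAbove R := by
      refine ⟨1, fun r ⟨g, ⟨hgF, hgpos⟩, hgr⟩ => ?_⟩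
      rw [← hgr]
      exact div_le_one_of_le₀ (hproj_le_err g hgF hgpos) (le_of_lt hgpos)
    have hβ_eq : β = sSup R := rfl
    have hβ0 : 0 ≤ β := by
      rw [hβ_eq]
      exact le_trans (div_nonneg (hproj_nonneg _) hbe_pos.le) (le_csSup hRbdd hfR)
    have hproj_le : projDist μ F (T f) ≤ β * bellErr γ rew P pol μ f := by
      have := le_csSup hRbdd hfR
      rw [← hβ_eq] at this
      exact (div_le_iff₀ hbe_pos).1 this
    -- sInf of squared distances is at most β² Qμ
    have hsq : I ≤ β ^ 2 * Qμ := by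
      have hc : β * Real.sqrt Qμ = β * bellErr γ rew P pol μ f := by rw [hbe]
      have hstep : ∀ δ : ℝ, 0 < δ → I ≤ (β * Real.sqrt Qμ + δ) ^ 2 := by
        intro δ hδ
        obtain ⟨v, ⟨g, hgF, hgv⟩, hvlt⟩ :=
          Real.lt_sInf_add_pos (s := (fun g => l2 μ (fun x => g x - T f x)) '' F)
            (hFne.image _) hδ
        have hv_nonneg : 0 ≤ v := hgv ▸ Real.sqrt_nonneg _
        have hvlt' : v < β * Real.sqrt Qμ + δ := by
          have := hproj_le
          rw [← hc] at this
          calc v < sInf ((fun g => l2 μ (fun x => g x - T f x)) '' F) + δ := hvlt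
            _ = projDist μ F (T f) + δ := rfl
            _ ≤ β * Real.sqrt Qμ + δ := by rw [hc]; linarith
        have hIle : I ≤ v ^ 2 := by
          have hv2 : v ^ 2 = l2sq μ (fun x => g x - T f x) := by
            rw [← hgv, OPC.sq_l2]
          rw [hv2]
          exact csInf_le ⟨0, fun b ⟨g', _, hgb⟩ => hgb ▸ OPC.l2sq_nonneg _ _⟩
            ⟨g, hgF, rfl⟩
        calc I ≤ v ^ 2 := hIle
          _ ≤ (β * Real.sqrt Qμ + δ) ^ 2 :=
            pow_le_pow_left₀ hv_nonneg hvlt'.le 2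
      have hfin : I ≤ (β * Real.sqrt Qμ) ^ 2 := by
        set c := β * Real.sqrt Qμ with hcd
        have hc0 : 0 ≤ c := mul_nonneg hβ0 (Real.sqrt_nonneg _)
        refine le_of_forall_sub_le fun ε hε => ?_
        have hδ : 0 < min 1 (ε / (2 * c + 1)) :=
          lt_min one_pos (div_pos hε (by linarith))
        have h1 := hstep _ hδ
        have h2 : min 1 (ε / (2 * c + 1)) ≤ 1 := min_le_left _ _
        have h3 : min 1 (ε / (2 * c + 1)) ≤ ε / (2 * c + 1) := min_le_right _ _
        have h4 : min 1 (ε / (2 * c + 1)) * (2 * c + 1) ≤ ε := by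
          rw [← le_div_iff₀ (by linarith : (0:ℝ) < 2 * c + 1)]
          exact h3
        nlinarith [hδ]
      calc I ≤ (β * Real.sqrt Qμ) ^ 2 := hfin
        _ = β ^ 2 * Qμ := by
          rw [mul_pow, Real.sq_sqrt hQμ_pos.le]
    have hβlt : β < 1 := hβ
    have hβ2 : β ^ 2 ≤ β := by nlinarith
    have hMlb : (1 - β) * Qμ ≤ minimaxLoss γ rew P pol μ F f := by
      rw [hM']
      nlinarith
    have h1β : (0 : ℝ) < 1 - β := by linarith
    have hQμ_le : Qμ ≤ minimaxLoss γ rew P pol μ F f / (1 - β) := by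
      rw [le_div_iff₀ h1β]; linarith [hMlb]
    -- concentrability
    have hCr : Qπ / Qμ ≤ C := le_csSup hC ⟨f, hfF, rfl⟩
    have hQπ_le : Qπ ≤ C * Qμ := (div_le_iff₀ hQμ_pos).1 hCr
    -- prediction error bound
    have hE := OPC.pred_err_sq_le P pol γ hγ0 hγ1 rew hrew_meas hrew_bdd fstar
      hfstar_meas hfstar_bdd hfix s0 hf_meas hf_bdd
    have hκ2 : (0 : ℝ) ≤ (1 / (1 - γ)) ^ 2 := sq_nonneg _
    calc (predErr pol fstar f s0) ^ 2
        ≤ (1 / (1 - γ)) ^ 2 * Qπ := hE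
      _ ≤ (1 / (1 - γ)) ^ 2 * (C * Qμ) := mul_le_mul_of_nonneg_left hQπ_le hκ2
      _ ≤ (1 / (1 - γ)) ^ 2 * (C * (minimaxLoss γ rew P pol μ F f / (1 - β))) := by
          refine mul_le_mul_of_nonneg_left (mul_le_mul_of_nonneg_left hQμ_le hC0) hκ2
      _ = (1 / (1 - γ)) ^ 2 * (C / (1 - β)) * minimaxLoss γ rew P pol μ F f := by
          field_simp
  refine ⟨key, ?_⟩
  have hK0 : 0 ≤ (1 / (1 - γ)) ^ 2 * (C / (1 - β)) := by
    have h1β : (0 : ℝ) < 1 - β := by linarith [hβ]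
    positivity
  refine Real.sSup_le ?_ hK0
  rintro r ⟨f, hfF, rfl⟩
  by_cases hM : 0 < minimaxLoss γ rew P pol μ F f
  · rw [div_le_iff₀ hM]
    exact key f hfF hM
  · refine le_trans ?_ hK0
    exact div_nonpos_iff.mpr (Or.inl ⟨sq_nonneg _, not_lt.1 hM⟩)

end
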